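/- Correctness of perturbed multiplication of a continuous variable by a binary variable: Let n ≥ 1, let x ∈ [−2, 2], and let y₁^+, …, y_n^+, y₁^−, …, y_n^− ∈ {0, 1} be bits such that either y_i^− = 0 for all i or y_i^+ = 0 for all i, encoding the value y := Σ_{i=1}^n y_i^+/2^i − Σ_{i=1}^n y_i^−/2^i. Let π₁^+, …, π_n^+, π₁^−, …, π_n^− ∈ (−1, 1) be perturbations and define CTB := Σ_{i=1}^n (1/2^i)·BM(x, y_i^+; π_i^+) − Σ_{i=1}^n (1/2^i)·BM(x, y_i^−; π_i^−), where BM(x, b; π) = 4·(1−b) + max(−4, x − 8·(1−b) + π). Then CTB = x·y + σ for some σ ∈ ℝ with |σ| ≤ max over all the perturbations of their absolute values. -/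

import Mathlib

/-- The perturbed bit-multiplication gadget: `BM(x, b; π) = 4(1−b) + max(−4, x − 8(1−b) + π)`. -/
noncomputable def BM (x b π : ℝ) : ℝ := 4 * (1 - b) + max (-4) (x - 8 * (1 - b) + π)

/-- The perturbed continuous-times-binary circuit. -/
noncomputable def CTB (n : ℕ) (x : ℝ) (yp ym πp πm : ℕ → ℝ) : ℝ :=
  (∑ i ∈ Finset.Icc 1 n, (1 / 2 ^ i : ℝ) * BM x (yp i) (πp i))
    - ∑ i ∈ Finset.Icc 1 n, (1 / 2 ^ i : ℝ) * BM x (ym i) (πm i)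

lemma BM_eq (x b π : ℝ) (hb : b = 0 ∨ b = 1) (hx : x ∈ Set.Icc (-2 : ℝ) 2)
    (hπ : π ∈ Set.Ioo (-1 : ℝ) 1) : BM x b π = b * (x + π) := by
  obtain ⟨hx1, hx2⟩ := hx
  obtain ⟨hp1, hp2⟩ := hπ
  rcases hb with h | h <;> subst h <;> unfold BM
  · rw [max_eq_left (by linarith)]; ring
  · rw [max_eq_right (by linarith)]; ring

lemma geom_le_one (n : ℕ) : ∑ i ∈ Finset.Icc 1 n, ((1:ℝ) / 2 ^ i) = 1 - 1 / 2 ^ n := by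
  induction n with
  | zero => simp
  | succ n ih =>
    rw [Finset.sum_Icc_succ_top (Nat.succ_le_succ (Nat.zero_le n)), ih]
    have : (2:ℝ) ^ (n+1) = 2 * 2 ^ n := by ring
    rw [this]
    have h2 : (2:ℝ) ^ n ≠ 0 := by positivity
    field_simp
    ring

/-- Correctness of perturbed multiplication of a continuous variable by a binary variable. -/
theorem contTimesBin_correct (n : ℕ) (hn : 1 ≤ n)
    (x : ℝ) (hx : x ∈ Set.Icc (-2 : ℝ) 2)
    (yp ym : ℕ → ℝ)
    (hbits : ∀ i, 1 ≤ i → i ≤ n → (yp i = 0 ∨ yp i = 1) ∧ (ym i = 0 ∨ ym i = 1))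
    (hsign : (∀ i, 1 ≤ i → i ≤ n → ym i = 0) ∨ (∀ i, 1 ≤ i → i ≤ n → yp i = 0))
    (πp πm : ℕ → ℝ)
    (hπ : ∀ i, 1 ≤ i → i ≤ n → πp i ∈ Set.Ioo (-1 : ℝ) 1 ∧ πm i ∈ Set.Ioo (-1 : ℝ) 1)
    (M : ℝ) (hM : ∀ i, 1 ≤ i → i ≤ n → |πp i| ≤ M ∧ |πm i| ≤ M) :
    ∃ σ : ℝ,
      CTB n x yp ym πp πm
        = x * ((∑ i ∈ Finset.Icc 1 n, yp i / 2 ^ i) - ∑ i ∈ Finset.Icc 1 n, ym i / 2 ^ i) + σ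
      ∧ |σ| ≤ M := by
  set σ : ℝ := (∑ i ∈ Finset.Icc 1 n, yp i * πp i / 2 ^ i)
      - ∑ i ∈ Finset.Icc 1 n, ym i * πm i / 2 ^ i with hσ
  refine ⟨σ, ?_, ?_⟩
  · unfold CTB
    have hp : ∀ i ∈ Finset.Icc 1 n,
        (1 / 2 ^ i : ℝ) * BM x (yp i) (πp i) = x * (yp i / 2 ^ i) + yp i * πp i / 2 ^ i := by
      intro i hi
      rw [Finset.mem_Icc] at hi
      rw [BM_eq x (yp i) (πp i) (hbits i hi.1 hi.2).1 hx (hπ i hi.1 hi.2).1]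
      ring
    have hm : ∀ i ∈ Finset.Icc 1 n,
        (1 / 2 ^ i : ℝ) * BM x (ym i) (πm i) = x * (ym i / 2 ^ i) + ym i * πm i / 2 ^ i := by
      intro i hi
      rw [Finset.mem_Icc] at hi
      rw [BM_eq x (ym i) (πm i) (hbits i hi.1 hi.2).2 hx (hπ i hi.1 hi.2).2]
      ring
    rw [Finset.sum_congr rfl hp, Finset.sum_congr rfl hm, Finset.sum_add_distrib,
      Finset.sum_add_distrib, ← Finset.mul_sum, ← Finset.mul_sum, hσ]
    ring
  · have hM0 : 0 ≤ M := le_trans (abs_nonneg _) (hM 1 le_rfl hn).1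
    have key : ∀ (y π : ℕ → ℝ), (∀ i, 1 ≤ i → i ≤ n → y i = 0 ∨ y i = 1) →
        (∀ i, 1 ≤ i → i ≤ n → |π i| ≤ M) →
        |∑ i ∈ Finset.Icc 1 n, y i * π i / 2 ^ i| ≤ M := by
      intro y π hy hπM
      calc |∑ i ∈ Finset.Icc 1 n, y i * π i / 2 ^ i|
          ≤ ∑ i ∈ Finset.Icc 1 n, |y i * π i / 2 ^ i| := Finset.abs_sum_le_sum_abs _ _
        _ ≤ ∑ i ∈ Finset.Icc 1 n, M * (1 / 2 ^ i) := by
            apply Finset.sum_le_sum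
            intro i hi
            rw [Finset.mem_Icc] at hi
            rw [abs_div, abs_mul]
            have h1 : |y i| ≤ 1 := by rcases hy i hi.1 hi.2 with h | h <;> rw [h] <;> norm_num
            have h2 : |π i| ≤ M := hπM i hi.1 hi.2
            have h3 : |(2:ℝ) ^ i| = 2 ^ i := abs_of_pos (by positivity)
            rw [h3]
            rw [div_le_iff₀ (by positivity : (0:ℝ) < 2 ^ i)]
            have : M * (1 / 2 ^ i) * 2 ^ i = M := by field_simp
            rw [this]
            calc |y i| * |π i| ≤ 1 * M := by
                  exact mul_le_mul h1 h2 (abs_nonneg _) (by norm_num)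
              _ = M := one_mul M
        _ = M * (1 - 1 / 2 ^ n) := by rw [← Finset.mul_sum, geom_le_one]
        _ ≤ M * 1 := by
            apply mul_le_mul_of_nonneg_left _ hM0
            have : (0:ℝ) < 1 / 2 ^ n := by positivity
            linarith
        _ = M := mul_one M
    rcases hsign with h | h
    · have : ∑ i ∈ Finset.Icc 1 n, ym i * πm i / 2 ^ i = 0 := by
        apply Finset.sum_eq_zero
        intro i hi
        rw [Finset.mem_Icc] at hi
        rw [h i hi.1 hi.2]; ring
      rw [hσ, this, sub_zero]
      exact key yp πp (fun i h1 h2 => (hbits i h1 h2).1) (fun i h1 h2 => (hM i h1 h2).1)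
    · have : ∑ i ∈ Finset.Icc 1 n, yp i * πp i / 2 ^ i = 0 := by
        apply Finset.sum_eq_zero
        intro i hi
        rw [Finset.mem_Icc] at hi
        rw [h i hi.1 hi.2]; ring
      rw [hσ, this, zero_sub, abs_neg]
      exact key ym πm (fun i h1 h2 => (hbits i h1 h2).2) (fun i h1 h2 => (hM i h1 h2).2)
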